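/- Fix d ≥ 1 and let G be any graph on n ≥ d + 1 vertices obtained from the complete graph K_{d+1} by a sequence of steps, each of which adds one new vertex together with d new edges joining it to d distinct existing vertices. Then G has exactly dn − (d+1 choose 2) edges and admits an infinitesimally rigid realization in ℝ^d; that is, there exists p : V → ℝ^d whose rigidity matrix has rank dn − (d+1 choose 2). Hence G is d-minimally rigid. -/

import Mathlib

open Classical in
/-- The rigidity matrix of a realization `p` of `G` in `ℝ^d`. Rows are indexed by
(ordered) pairs of vertices, with the row of a non-adjacent pair equal to zero;
the row of an edge `uv` carries `p u - p v` in the `d` columns of `u` and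
`p v - p u` in the `d` columns of `v`. (Listing each edge in both orientations
does not change the row space, hence the rank.) -/
noncomputable def rigidityMatrix {V : Type*} (d : ℕ) (G : SimpleGraph V)
    (p : V → EuclideanSpace ℝ (Fin d)) : Matrix (V × V) (V × Fin d) ℝ :=
  fun e c =>
    if G.Adj e.1 e.2 then
      if c.1 = e.1 then p e.1 c.2 - p e.2 c.2
      else if c.1 = e.2 then p e.2 c.2 - p e.1 c.2
      else 0
    else 0

/-- The graph on `Fin n` obtained from the complete graph on the first `d + 1` vertices
by successively joining each vertex `i ≥ d + 1` to the `d` distinct earlier vertices in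
`a i`. -/
def hennebergDimGraph (d n : ℕ) (a : Fin n → Finset (Fin n)) : SimpleGraph (Fin n) :=
  SimpleGraph.fromRel (fun u v =>
    (u.val < d + 1 ∧ v.val < d + 1) ∨ (d + 1 ≤ v.val ∧ u ∈ a v))

open Finset in
/-- If a weighted sum of the powers `x^k`, `k < d+1`, over at most `d+1` points with
distinct values vanishes, then all the weights vanish. (Lagrange interpolation.) -/
lemma moment_vanish {α : Type*} [DecidableEq α] (d : ℕ) (f : α → ℝ) (hf : Function.Injective f)
    (s : Finset α) (hs : s.card ≤ d + 1) (c : α → ℝ)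
    (h : ∀ k < d + 1, ∑ x ∈ s, c x * (f x) ^ k = 0) :
    ∀ x ∈ s, c x = 0 := by
  intro x₀ hx₀
  have hinj : Set.InjOn f s := hf.injOn
  set q := Lagrange.basis s f x₀ with hq
  have hdeg : q.natDegree < d + 1 := by
    rw [hq, Lagrange.natDegree_basis hinj hx₀]
    have : 1 ≤ s.card := Finset.card_pos.mpr ⟨x₀, hx₀⟩
    omega
  have key : ∑ x ∈ s, c x * q.eval (f x) = c x₀ := by
    rw [Finset.sum_eq_single_of_mem x₀ hx₀]
    · rw [hq, Lagrange.eval_basis_self hinj hx₀, mul_one]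
    · intro b hb hbne
      rw [hq, Lagrange.eval_basis_of_ne hbne.symm hb, mul_zero]
  have key2 : ∑ x ∈ s, c x * q.eval (f x) = 0 := by
    have : ∀ x ∈ s, c x * q.eval (f x)
        = ∑ k ∈ Finset.range (d + 1), q.coeff k * (c x * f x ^ k) := by
      intro x hx
      rw [Polynomial.eval_eq_sum_range' hdeg, Finset.mul_sum]
      exact Finset.sum_congr rfl fun k _ => by ring
    rw [Finset.sum_congr rfl this, Finset.sum_comm]
    refine Finset.sum_eq_zero fun k hk => ?_
    rw [← Finset.mul_sum, h k (Finset.mem_range.mp hk), mul_zero]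
  rw [key2] at key
  exact key.symm

/-- Linear independence of difference vectors of points on the moment curve:
if all points of `s` are below `v` and `s.card ≤ d`, and a linear combination of the
vectors `(v^(k+1) - u^(k+1))_{k < d}` vanishes, then the coefficients vanish. -/
lemma diff_vanish {n : ℕ} (d : ℕ) (v : Fin n) (s : Finset (Fin n)) (hcard : s.card ≤ d)
    (hlt : ∀ u ∈ s, u < v) (lam : Fin n → ℝ)
    (h : ∀ k : Fin d, ∑ u ∈ s, lam u *
      (((v : ℕ) : ℝ) ^ ((k : ℕ) + 1) - ((u : ℕ) : ℝ) ^ ((k : ℕ) + 1)) = 0) :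
    ∀ u ∈ s, lam u = 0 := by
  classical
  have hv : v ∉ s := fun hv => lt_irrefl v (hlt v hv)
  set c : Fin n → ℝ := fun x => if x = v then ∑ u ∈ s, lam u else - lam x with hc
  have hf : Function.Injective (fun x : Fin n => ((x : ℕ) : ℝ)) :=
    fun x y hxy => Fin.val_injective (Nat.cast_injective hxy)
  have hmain : ∀ u ∈ insert v s, c u = 0 := by
    refine moment_vanish d _ hf (insert v s) ?_ c ?_
    · rw [Finset.card_insert_of_notMem hv]; omega
    · intro k hk
      rw [Finset.sum_insert hv]
      have hcv : c v = ∑ u ∈ s, lam u := by simp [hc]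
      have hcu : ∀ u ∈ s, c u = - lam u := by
        intro u hu
        have hne : u ≠ v := ne_of_lt (hlt u hu)
        simp [hc, hne]
      have e1 : ∑ x ∈ s, c x * ((x : ℕ) : ℝ) ^ k
          = - ∑ x ∈ s, lam x * ((x : ℕ) : ℝ) ^ k := by
        rw [← Finset.sum_neg_distrib]
        exact Finset.sum_congr rfl fun u hu => by rw [hcu u hu]; ring
      rw [hcv, e1]
      rcases Nat.eq_zero_or_pos k with hk0 | hk0
      · subst hk0; simp
      · obtain ⟨j, hj, rfl⟩ : ∃ j, j < d ∧ k = j + 1 :=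
          ⟨k - 1, by omega, by omega⟩
        have h2 := h ⟨j, hj⟩
        simp only [mul_sub, Finset.sum_sub_distrib, ← Finset.sum_mul] at h2
        linarith
  intro u hu
  have h1 := hmain u (Finset.mem_insert_of_mem hu)
  have hne : u ≠ v := ne_of_lt (hlt u hu)
  simpa [hc, hne] using h1


open Finset Module Submodule

/-- Any graph obtained from `K_{d+1}` by repeatedly adding a new vertex joined to `d`
distinct existing vertices has exactly `dn - (d+1 choose 2)` edges and admits an
infinitesimally rigid realization in `ℝ^d`; hence it is `d`-minimally rigid. -/
theorem hennebergDim_minimally_rigid (d : ℕ) (hd : 1 ≤ d) (n : ℕ) (hn : d + 1 ≤ n)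
    (a : Fin n → Finset (Fin n))
    (ha : ∀ i : Fin n, d + 1 ≤ i.val → (a i).card = d ∧ ∀ j ∈ a i, j.val < i.val) :
    (hennebergDimGraph d n a).edgeSet.ncard = d * n - (d + 1).choose 2 ∧
    ∃ p : Fin n → EuclideanSpace ℝ (Fin d),
      (rigidityMatrix d (hennebergDimGraph d n a) p).rank =
        d * n - (d + 1).choose 2 := by
  classical
  set G := hennebergDimGraph d n a with hG
  -- adjacency characterization for ordered pairs
  have hadj : ∀ u v : Fin n, u < v →
      (G.Adj u v ↔ (v.val < d + 1 ∨ (d + 1 ≤ v.val ∧ u ∈ a v))) := by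
    intro u v huv
    have hvu : u.val < v.val := huv
    constructor
    · intro h
      rw [hG, hennebergDimGraph, SimpleGraph.fromRel_adj] at h
      obtain ⟨hne, (⟨h1, h2⟩ | ⟨h1, h2⟩) | (⟨h1, h2⟩ | ⟨h1, h2⟩)⟩ := h
      · exact Or.inl h2
      · exact Or.inr ⟨h1, h2⟩
      · exact Or.inl h1
      · exact absurd ((ha u h1).2 v h2) (by omega)
    · intro h
      rw [hG, hennebergDimGraph, SimpleGraph.fromRel_adj]
      refine ⟨ne_of_lt huv, Or.inl ?_⟩
      rcases h with h | ⟨h1, h2⟩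
      · exact Or.inl ⟨by omega, h⟩
      · exact Or.inr ⟨h1, h2⟩
  -- ordered edges
  set S : Finset (Fin n × Fin n) :=
    Finset.filter (fun e : Fin n × Fin n => e.1 < e.2 ∧ G.Adj e.1 e.2) Finset.univ with hSdef
  have hS : ∀ e : Fin n × Fin n, e ∈ S ↔ e.1 < e.2 ∧ G.Adj e.1 e.2 := by
    intro e; simp [hSdef]
  -- lower neighborhoods
  set N : Fin n → Finset (Fin n) := fun v => Finset.filter (fun u => (u, v) ∈ S) Finset.univ
    with hNdef
  have hN : ∀ v u : Fin n, u ∈ N v ↔ (u, v) ∈ S := by intro v u; simp [hNdef]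
  have hNlt : ∀ v : Fin n, ∀ u ∈ N v, u < v := by
    intro v u hu
    exact (((hS _).mp ((hN v u).mp hu)).1 : u < v)
  have hNlow : ∀ v : Fin n, v.val < d + 1 → N v = Finset.Iio v := by
    intro v hv
    ext u
    rw [hN, Finset.mem_Iio, hS]
    constructor
    · rintro ⟨h, -⟩; exact h
    · intro h
      exact ⟨h, (hadj u v h).mpr (Or.inl hv)⟩
  have hNhigh : ∀ v : Fin n, d + 1 ≤ v.val → N v = a v := by
    intro v hv
    ext u
    rw [hN, hS]
    constructor
    · rintro ⟨hlt, hadjuv⟩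
      rcases (hadj u v hlt).mp hadjuv with h | ⟨-, h⟩
      · omega
      · exact h
    · intro hu
      have hlt : u < v := (ha v hv).2 u hu
      exact ⟨hlt, (hadj u v hlt).mpr (Or.inr ⟨hv, hu⟩)⟩
  have hNcardval : ∀ v : Fin n, (N v).card = if v.val < d + 1 then v.val else d := by
    intro v
    by_cases hv : v.val < d + 1
    · rw [if_pos hv, hNlow v hv, Fin.card_Iio]
    · rw [if_neg hv, hNhigh v (by omega), (ha v (by omega)).1]
  have hNcard : ∀ v : Fin n, (N v).card ≤ d := by
    intro v
    rw [hNcardval v]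
    split <;> omega
  -- cardinality of S
  have hfiber : ∀ v : Fin n, S.filter (fun e => e.2 = v) = (N v).image (fun u => (u, v)) := by
    intro v
    ext e
    simp only [Finset.mem_filter, Finset.mem_image]
    constructor
    · rintro ⟨heS, h2⟩
      exact ⟨e.1, (hN v e.1).mpr (by rw [← h2]; exact (by simpa using heS)), by
        rw [← h2]⟩
    · rintro ⟨u, hu, rfl⟩
      exact ⟨(hN v u).mp hu, rfl⟩
  have hScard : S.card = d * n - (d + 1).choose 2 := by
    have h1 : S.card = ∑ v : Fin n, (S.filter (fun e => e.2 = v)).card :=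
      Finset.card_eq_sum_card_fiberwise (fun e _ => Finset.mem_univ e.2)
    have h2 : ∀ v : Fin n, (S.filter (fun e => e.2 = v)).card = (N v).card := by
      intro v
      rw [hfiber v]
      exact Finset.card_image_of_injective _ (fun x y hxy => (Prod.mk.injEq _ _ _ _ ▸ hxy).1)
    rw [h1, Finset.sum_congr rfl (fun v _ => (h2 v).trans (hNcardval v))]
    rw [Fin.sum_univ_eq_sum_range (fun k => if k < d + 1 then k else d) n]
    have h3 : ∑ k ∈ Finset.range n, (if k < d + 1 then k else d)
        = (∑ k ∈ Finset.range (d+1), (if k < d + 1 then k else d))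
          + ∑ k ∈ Finset.Ico (d+1) n, (if k < d + 1 then k else d) := by
      rw [Finset.range_eq_Ico, Finset.range_eq_Ico]
      exact (Finset.sum_Ico_consecutive (fun k => if k < d + 1 then k else d) (Nat.zero_le _) hn).symm
    rw [h3]
    have h4 : ∑ k ∈ Finset.range (d+1), (if k < d + 1 then k else d)
        = (d + 1).choose 2 := by
      rw [Finset.sum_congr rfl (fun k hk => if_pos (Finset.mem_range.mp hk))]
      exact (Finset.sum_range_id (d+1)).trans (Nat.choose_two_right (d+1)).symm
    have h5 : ∑ k ∈ Finset.Ico (d+1) n, (if k < d + 1 then k else d)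
        = (n - (d+1)) * d := by
      rw [Finset.sum_congr rfl (fun k hk => if_neg (by
        have := (Finset.mem_Ico.mp hk).1; omega))]
      rw [Finset.sum_const, Nat.card_Ico, smul_eq_mul]
    rw [h4, h5]
    have hdvd : 2 ∣ (d + 1) * d := by
      rcases Nat.even_mul_succ_self d with ⟨t, ht⟩
      exact ⟨t, by rw [Nat.mul_comm]; omega⟩
    have hc2 : 2 * (d + 1).choose 2 = (d + 1) * d := by
      rw [Nat.choose_two_right, Nat.succ_sub_one]
      exact Nat.mul_div_cancel' hdvd
    have hsub : (n - (d+1)) * d = n * d - (d+1) * d := Nat.sub_mul _ _ _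
    have hle : (d+1) * d ≤ n * d := Nat.mul_le_mul_right d hn
    have hcomm : d * n = n * d := Nat.mul_comm d n
    rw [hsub, hcomm]
    set X := n * d
    set Y := (d + 1) * d
    set C := (d + 1).choose 2
    omega
  -- the edge set has the right cardinality
  have hedge : G.edgeSet.ncard = d * n - (d + 1).choose 2 := by
    have hEset : G.edgeSet = ↑(S.image (fun e : Fin n × Fin n => s(e.1, e.2))) := by
      ext z
      refine Sym2.ind (fun u v => ?_) z
      simp only [SimpleGraph.mem_edgeSet, Finset.coe_image, Set.mem_image, Finset.mem_coe]
      constructor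
      · intro h
        rcases lt_or_gt_of_ne h.ne with hlt | hgt
        · exact ⟨(u, v), (hS _).mpr ⟨hlt, h⟩, rfl⟩
        · exact ⟨(v, u), (hS _).mpr ⟨hgt, h.symm⟩, Sym2.eq_swap⟩
      · rintro ⟨⟨x, y⟩, hxy, heq⟩
        have hadjxy : G.Adj x y := ((hS _).mp hxy).2
        rcases Sym2.eq_iff.mp heq with ⟨rfl, rfl⟩ | ⟨rfl, rfl⟩
        · exact hadjxy
        · exact hadjxy.symm
    have hinj : Set.InjOn (fun e : Fin n × Fin n => s(e.1, e.2)) ↑S := by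
      rintro ⟨x, y⟩ hxy ⟨x', y'⟩ hxy' heq
      have h1 : x < y := ((hS _).mp hxy).1
      have h2 : x' < y' := ((hS _).mp hxy').1
      rcases Sym2.eq_iff.mp heq with ⟨rfl, rfl⟩ | ⟨rfl, rfl⟩
      · rfl
      · exact absurd h2 (not_lt.mpr h1.le)
    rw [hEset, Set.ncard_coe_finset, Finset.card_image_of_injOn hinj, hScard]
  refine ⟨hedge, ⟨fun i => WithLp.toLp 2 (fun k : Fin d => ((i : ℕ) : ℝ) ^ ((k : ℕ) + 1)), ?_⟩⟩
  set p : Fin n → EuclideanSpace ℝ (Fin d) :=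
    fun i => WithLp.toLp 2 (fun k : Fin d => ((i : ℕ) : ℝ) ^ ((k : ℕ) + 1)) with hp
  set A := rigidityMatrix d G p with hA
  -- row values
  have hrow0 : ∀ u w : Fin n, ¬ G.Adj u w → A (u, w) = 0 := by
    intro u w h
    funext c
    simp [hA, rigidityMatrix, h]
  have hAsymm : ∀ u w : Fin n, A (w, u) = A (u, w) := by
    intro u w
    by_cases h : G.Adj u w
    · funext c
      have hne : u ≠ w := h.ne
      simp only [hA, rigidityMatrix]
      rw [if_pos h, if_pos h.symm]
      by_cases h1 : c.1 = u <;> by_cases h2 : c.1 = w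
      · exact absurd (h1.symm.trans h2) hne
      · simp [h1, h2, hne, Ne.symm hne]
      · simp [h1, h2, hne, Ne.symm hne]
      · simp [h1, h2, hne, Ne.symm hne]
    · rw [hrow0 u w h, hrow0 w u (fun h' => h h'.symm)]
  have hr1 : A.rank = finrank ℝ (span ℝ (Set.range A)) := by
    rw [← Matrix.rank_transpose A, Matrix.rank_eq_finrank_span_cols]; rfl
  have hspan : span ℝ (Set.range A) = span ℝ (A '' ↑S) := by
    refine le_antisymm ?_ (span_mono (Set.image_subset_range _ _))
    rw [span_le]
    rintro x ⟨⟨u, w⟩, rfl⟩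
    by_cases h : G.Adj u w
    · rcases lt_or_gt_of_ne h.ne with hlt | hgt
      · exact subset_span ⟨(u, w), (hS _).mpr ⟨hlt, h⟩, rfl⟩
      · exact subset_span ⟨(w, u), (hS _).mpr ⟨hgt, h.symm⟩, hAsymm u w⟩
    · rw [hrow0 u w h]
      exact Submodule.zero_mem _
  have hbli : LinearIndependent ℝ (fun e : {x // x ∈ S} => A e.1) := by
    rw [Fintype.linearIndependent_iff]
    intro g hg
    set lam : Fin n × Fin n → ℝ := fun e => if h : e ∈ S then g ⟨e, h⟩ else 0 with hlam
    have hsum : ∑ e ∈ S, lam e • A e = (0 : (Fin n × Fin d) → ℝ) := by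
      calc ∑ e ∈ S, lam e • A e
          = ∑ e ∈ S.attach, lam e.1 • A e.1 := (Finset.sum_attach S _).symm
        _ = ∑ e ∈ S.attach, g e • A e.1 := Finset.sum_congr rfl (fun e _ => by
              rw [hlam]
              exact congrArg (· • A e.1) (dif_pos e.2))
        _ = 0 := by rw [← Finset.univ_eq_attach]; exact hg
    have key : ∀ m : ℕ, ∀ v : Fin n, n - v.val = m →
        ∀ u : Fin n, (u, v) ∈ S → lam (u, v) = 0 := by
      intro m
      induction m using Nat.strong_induction_on with
      | _ m IH =>
        intro v hvm u huv
        have hcol : ∀ k : Fin d, ∑ u' ∈ N v, lam (u', v) *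
            (((v : ℕ) : ℝ) ^ ((k : ℕ) + 1) - ((u' : ℕ) : ℝ) ^ ((k : ℕ) + 1)) = 0 := by
          intro k
          have h0 : ∑ e ∈ S, lam e * A e (v, k) = 0 := by
            have h1 := congrFun hsum (v, k)
            rw [Finset.sum_apply] at h1
            simpa [smul_eq_mul] using h1
          have hfil : ∑ e ∈ S.filter (fun e => e.2 = v), lam e * A e (v, k)
              = ∑ e ∈ S, lam e * A e (v, k) := by
            refine Finset.sum_filter_of_ne ?_
            intro e heS hne
            by_contra h2v
            rcases eq_or_ne e.1 v with h1v | h1v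
            · have hlt : v < e.2 := by
                have h3 := ((hS e).mp heS).1
                rwa [h1v] at h3
              have hz : lam (v, e.2) = 0 := by
                refine IH (n - e.2.val) ?_ e.2 rfl v ?_
                · have h2n : e.2.val < n := e.2.isLt
                  have h4 : v.val < e.2.val := hlt
                  omega
                · have h5 : (e.1, e.2) ∈ S := by simpa using heS
                  rwa [h1v] at h5
              apply hne
              have he : e = (v, e.2) := by rw [← h1v]
              rw [he, hz, zero_mul]
            · apply hne
              have hv2 : v ≠ e.2 := fun h => h2v h.symm
              have hz : A e (v, k) = 0 := by
                simp [hA, rigidityMatrix, Ne.symm h1v, hv2]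
              rw [hz, mul_zero]
          have hre : ∑ e ∈ S.filter (fun e => e.2 = v), lam e * A e (v, k)
              = ∑ u' ∈ N v, lam (u', v) * A (u', v) (v, k) := by
            rw [hfiber v]
            rw [Finset.sum_image (fun x _ y _ hxy => (Prod.mk.injEq x v y v ▸ hxy).1)]
          have hval : ∀ u' ∈ N v, A (u', v) (v, k)
              = ((v : ℕ) : ℝ) ^ ((k : ℕ) + 1) - ((u' : ℕ) : ℝ) ^ ((k : ℕ) + 1) := by
            intro u' hu'
            have huS := (hN v u').mp hu'
            have hlt : u' < v := ((hS _).mp huS).1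
            have hadj' : G.Adj u' v := ((hS _).mp huS).2
            have hvne : v ≠ u' := ne_of_gt hlt
            simp [hA, rigidityMatrix, hadj', hvne, hp]
          calc ∑ u' ∈ N v, lam (u', v) *
              (((v : ℕ) : ℝ) ^ ((k : ℕ) + 1) - ((u' : ℕ) : ℝ) ^ ((k : ℕ) + 1))
              = ∑ u' ∈ N v, lam (u', v) * A (u', v) (v, k) :=
                Finset.sum_congr rfl (fun u' hu' => by rw [hval u' hu'])
            _ = 0 := by rw [← hre, hfil, h0]
        exact diff_vanish d v (N v) (hNcard v) (hNlt v) (fun u' => lam (u', v)) hcol u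
          ((hN v u).mpr huv)
    intro i
    have h0 : lam i.1 = 0 := key (n - i.1.2.val) i.1.2 rfl i.1.1 (by
      rw [Prod.mk.eta]; exact i.2)
    simp only [hlam] at h0
    rwa [dif_pos i.2] at h0
  have hrange : Set.range (fun e : {x // x ∈ S} => A e.1) = A '' ↑S :=
    (Set.image_eq_range A ↑S).symm
  rw [hr1, hspan, ← hrange, finrank_span_eq_card hbli, Fintype.card_coe, hScard]
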